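/- Under the SISO discrete-time adaptive law setup with |k_p| · xᵀ Γ x < 2 xᵀ x for all nonzero x ∈ ℝ^N, the parameter estimates are uniformly bounded: sup_{t ∈ ℕ} ‖θ(t)‖ < ∞ and sup_{t ∈ ℕ} |ρ(t)| < ∞ (i.e. θ ∈ L^∞ and ρ ∈ L^∞). -/

import Mathlib

open Matrix BigOperators

/-- SISO discrete-time adaptive law (Lemma 2.1): under `Γ < (2/|k_p|) I`,
the parameter estimates `θ` and `ρ` are uniformly bounded. -/
theorem siso_discrete_adaptive_law_parameter_boundedness
    (N : ℕ) (hN : 0 < N)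
    (ζ : ℕ → Fin N → ℝ) (ξ : ℕ → ℝ)
    (kp : ℝ) (hkp : kp ≠ 0)
    (θs : Fin N → ℝ)
    (Γ : Matrix (Fin N) (Fin N) ℝ) (hΓ : Γ.PosDef)
    (hΓ2 : ∀ x : Fin N → ℝ, x ≠ 0 →
      |kp| * (∑ i, x i * (Γ.mulVec x) i) < 2 * ∑ i, x i * x i)
    (γ : ℝ) (hγ1 : 0 < γ) (hγ2 : γ < 2)
    (θ : ℕ → Fin N → ℝ) (ρ : ℕ → ℝ)
    (m ε : ℕ → ℝ)
    (hm : ∀ t, m t = Real.sqrt (1 + (∑ i, ζ t i * ζ t i) + ξ t ^ 2))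
    (hε : ∀ t, ε t = kp * (∑ i, (θ t i - θs i) * ζ t i) + (ρ t - kp) * ξ t)
    (hθ : ∀ t, θ (t + 1) = θ t - (Real.sign kp * ε t / m t ^ 2) • Γ.mulVec (ζ t))
    (hρ : ∀ t, ρ (t + 1) = ρ t - γ * ξ t * ε t / m t ^ 2) :
    (∃ C : ℝ, ∀ t, ‖θ t‖ ≤ C) ∧ (∃ C : ℝ, ∀ t, |ρ t| ≤ C) := by
  classical
  have hkpabs : 0 < |kp| := abs_pos.mpr hkp
  have hdet : IsUnit Γ.det := hΓ.det_pos.ne'.isUnit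
  have hΓΓ : Γ * Γ⁻¹ = 1 := Matrix.mul_nonsing_inv Γ hdet
  have hΓiΓ : Γ⁻¹ * Γ = 1 := Matrix.nonsing_inv_mul Γ hdet
  have hGsym : Γᵀ = Γ := by
    have h := hΓ.isHermitian
    rwa [Matrix.IsHermitian, Matrix.conjTranspose_eq_transpose_of_trivial] at h
  have hGisym : (Γ⁻¹)ᵀ = Γ⁻¹ := by
    rw [Matrix.transpose_nonsing_inv, hGsym]
  -- symmetry of the bilinear forms
  have symm : ∀ (A : Matrix (Fin N) (Fin N) ℝ), Aᵀ = A →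
      ∀ v w : Fin N → ℝ, v ⬝ᵥ A *ᵥ w = w ⬝ᵥ A *ᵥ v := by
    intro A hA v w
    rw [Matrix.dotProduct_mulVec, ← Matrix.mulVec_transpose, hA, dotProduct_comm]
  have hdotnn : ∀ x : Fin N → ℝ, 0 ≤ x ⬝ᵥ x := by
    intro x
    exact Finset.sum_nonneg fun i _ => mul_self_nonneg (x i)
  -- nonstrict version of hΓ2
  have hQ2 : ∀ x : Fin N → ℝ, |kp| * (x ⬝ᵥ Γ *ᵥ x) ≤ 2 * (x ⬝ᵥ x) := by
    intro x
    by_cases hx : x = 0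
    · simp [hx, dotProduct]
    · exact le_of_lt (hΓ2 x hx)
  -- positive semidefiniteness of Γ
  have hPSD : ∀ x : Fin N → ℝ, 0 ≤ x ⬝ᵥ Γ *ᵥ x := by
    intro x
    have h := hΓ.posSemidef.dotProduct_mulVec_nonneg x
    simpa using h
  -- key lower bound for the Γ⁻¹ quadratic form
  have hlow : ∀ x : Fin N → ℝ, |kp| / 2 * (x ⬝ᵥ x) ≤ x ⬝ᵥ Γ⁻¹ *ᵥ x := by
    intro x
    set z : Fin N → ℝ := Γ⁻¹ *ᵥ x - (|kp| / 2) • x with hz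
    have e1 : Γ *ᵥ (Γ⁻¹ *ᵥ x) = x := by
      rw [Matrix.mulVec_mulVec, hΓΓ, Matrix.one_mulVec]
    have ecross : (Γ⁻¹ *ᵥ x) ⬝ᵥ Γ *ᵥ x = x ⬝ᵥ x := by
      rw [symm Γ hGsym, e1]
    have hexp : z ⬝ᵥ Γ *ᵥ z
        = x ⬝ᵥ Γ⁻¹ *ᵥ x - 2 * (|kp| / 2) * (x ⬝ᵥ x) + (|kp| / 2) ^ 2 * (x ⬝ᵥ Γ *ᵥ x) := by
      rw [hz, Matrix.mulVec_sub, Matrix.mulVec_smul, sub_dotProduct,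
        dotProduct_sub, dotProduct_sub, smul_dotProduct,
        smul_dotProduct, dotProduct_smul, dotProduct_smul,
        e1, ecross]
      have h7 : (Γ⁻¹ *ᵥ x) ⬝ᵥ x = x ⬝ᵥ Γ⁻¹ *ᵥ x := dotProduct_comm _ _
      rw [h7]
      simp only [smul_eq_mul]
      ring
    have hpos : 0 ≤ z ⬝ᵥ Γ *ᵥ z := hPSD z
    have h2 := hQ2 x
    nlinarith [hpos, hexp, mul_le_mul_of_nonneg_left h2 (by positivity : (0:ℝ) ≤ |kp| / 4)]
  -- sup-norm bounded by dot product
  have hnorm : ∀ x : Fin N → ℝ, ‖x‖ ^ 2 ≤ x ⬝ᵥ x := by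
    intro x
    have h1 : ‖x‖ ≤ Real.sqrt (x ⬝ᵥ x) := by
      rw [pi_norm_le_iff_of_nonneg (Real.sqrt_nonneg _)]
      intro i
      rw [Real.norm_eq_abs, ← Real.sqrt_sq_eq_abs]
      apply Real.sqrt_le_sqrt
      have h2 : x i * x i ≤ ∑ j, x j * x j :=
        Finset.single_le_sum (f := fun j => x j * x j)
          (fun j _ => mul_self_nonneg (x j)) (Finset.mem_univ i)
      calc x i ^ 2 = x i * x i := by ring
        _ ≤ ∑ j, x j * x j := h2
        _ = x ⬝ᵥ x := rfl
    calc ‖x‖ ^ 2 ≤ Real.sqrt (x ⬝ᵥ x) ^ 2 := by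
          exact pow_le_pow_left₀ (norm_nonneg _) h1 2
      _ = x ⬝ᵥ x := Real.sq_sqrt (hdotnn x)
  -- set up Lyapunov function
  set φ : ℕ → Fin N → ℝ := fun t => θ t - θs with hφ
  set ψ : ℕ → ℝ := fun t => ρ t - kp with hψ
  set V : ℕ → ℝ := fun t => |kp| * (φ t ⬝ᵥ Γ⁻¹ *ᵥ φ t) + ψ t ^ 2 / γ with hV
  have hm2 : ∀ t, m t ^ 2 = 1 + (ζ t ⬝ᵥ ζ t) + ξ t ^ 2 := by
    intro t
    rw [hm t, Real.sq_sqrt]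
    · rfl
    · have h := hdotnn (ζ t)
      have h' : (0:ℝ) ≤ ∑ i, ζ t i * ζ t i := h
      positivity
  have hmpos : ∀ t, 0 < m t ^ 2 := by
    intro t
    rw [hm2 t]
    have h := hdotnn (ζ t)
    positivity
  -- ε in terms of φ, ψ
  have hεt : ∀ t, ε t = kp * (φ t ⬝ᵥ ζ t) + ψ t * ξ t := by
    intro t
    rw [hε t]
    simp [hφ, hψ, dotProduct]
  -- the Lyapunov decrement
  have hVmono : ∀ t, V (t + 1) ≤ V t := by
    intro t
    set a : ℝ := ε t / m t ^ 2 with ha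
    set c : ℝ := Real.sign kp * ε t / m t ^ 2 with hc
    have hφ1 : φ (t + 1) = φ t - c • (Γ *ᵥ ζ t) := by
      show θ (t + 1) - θs = (θ t - θs) - c • (Γ *ᵥ ζ t)
      rw [hθ t, sub_right_comm]
    have hψ1 : ψ (t + 1) = ψ t - γ * ξ t * a := by
      show ρ (t + 1) - kp = (ρ t - kp) - γ * ξ t * a
      rw [hρ t, ha]
      ring
    have e1 : Γ⁻¹ *ᵥ (Γ *ᵥ ζ t) = ζ t := by
      rw [Matrix.mulVec_mulVec, hΓiΓ, Matrix.one_mulVec]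
    have ecross2 : (Γ *ᵥ ζ t) ⬝ᵥ Γ⁻¹ *ᵥ φ t = φ t ⬝ᵥ ζ t := by
      rw [symm _ hGisym, e1]
    have hsgn : Real.sign kp * |kp| = kp := by
      rcases lt_or_gt_of_ne hkp with h | h
      · rw [Real.sign_of_neg h, abs_of_neg h]; ring
      · rw [Real.sign_of_pos h, abs_of_pos h]; ring
    have hsign : |kp| * c = kp * a := by
      have h9 : |kp| * (Real.sign kp * ε t / m t ^ 2)
          = Real.sign kp * |kp| * (ε t / m t ^ 2) := by ring
      rw [hc, ha, h9, hsgn]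
    have hsq : Real.sign kp ^ 2 = 1 := by
      rcases lt_or_gt_of_ne hkp with h | h
      · rw [Real.sign_of_neg h]; norm_num
      · rw [Real.sign_of_pos h]; norm_num
    have hc2 : c ^ 2 = a ^ 2 := by
      rw [hc, ha, div_pow, div_pow, mul_pow, hsq, one_mul]
    have hB1 : φ (t + 1) ⬝ᵥ Γ⁻¹ *ᵥ φ (t + 1)
        = φ t ⬝ᵥ Γ⁻¹ *ᵥ φ t - 2 * c * (φ t ⬝ᵥ ζ t) + a ^ 2 * (ζ t ⬝ᵥ Γ *ᵥ ζ t) := by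
      rw [hφ1, Matrix.mulVec_sub, Matrix.mulVec_smul, sub_dotProduct,
        dotProduct_sub, dotProduct_sub, smul_dotProduct,
        smul_dotProduct, dotProduct_smul, dotProduct_smul,
        e1, ecross2]
      have e4 : (Γ *ᵥ ζ t) ⬝ᵥ ζ t = ζ t ⬝ᵥ Γ *ᵥ ζ t := dotProduct_comm _ _
      rw [e4, ← hc2]
      simp only [smul_eq_mul]
      ring
    have hψsq : (ψ t - γ * ξ t * a) ^ 2 / γ
        = ψ t ^ 2 / γ - 2 * a * (ψ t * ξ t) + a ^ 2 * (γ * ξ t ^ 2) := by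
      field_simp
      ring
    have key : V (t + 1) = V t - 2 * a * ε t
        + a ^ 2 * (|kp| * (ζ t ⬝ᵥ Γ *ᵥ ζ t) + γ * ξ t ^ 2) := by
      simp only [hV]
      rw [hB1, hψ1, hψsq, hεt t]
      linear_combination (-2 * (φ t ⬝ᵥ ζ t)) * hsign
    have hS : |kp| * (ζ t ⬝ᵥ Γ *ᵥ ζ t) + γ * ξ t ^ 2 ≤ 2 * m t ^ 2 := by
      have h1 := hQ2 (ζ t)
      have h2 : γ * ξ t ^ 2 ≤ 2 * ξ t ^ 2 :=
        mul_le_mul_of_nonneg_right hγ2.le (sq_nonneg _)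
      rw [hm2 t]
      linarith [hdotnn (ζ t)]
    have haM : a * m t ^ 2 = ε t := by
      rw [ha, div_mul_cancel₀ _ (hmpos t).ne']
    have hrw : -2 * a * ε t + a ^ 2 * (|kp| * (ζ t ⬝ᵥ Γ *ᵥ ζ t) + γ * ξ t ^ 2)
        = a ^ 2 * ((|kp| * (ζ t ⬝ᵥ Γ *ᵥ ζ t) + γ * ξ t ^ 2) - 2 * m t ^ 2) := by
      rw [← haM]; ring
    have hdec : -2 * a * ε t + a ^ 2 * (|kp| * (ζ t ⬝ᵥ Γ *ᵥ ζ t) + γ * ξ t ^ 2) ≤ 0 := by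
      rw [hrw]
      exact mul_nonpos_of_nonneg_of_nonpos (sq_nonneg a) (by linarith)
    linarith [key, hdec]
  have hVle : ∀ t, V t ≤ V 0 := by
    intro t
    induction t with
    | zero => exact le_refl _
    | succ n ih => exact (hVmono n).trans ih
  have hBpos : ∀ t, 0 ≤ φ t ⬝ᵥ Γ⁻¹ *ᵥ φ t := fun t =>
    le_trans (mul_nonneg (by positivity) (hdotnn _)) (hlow _)
  constructor
  · refine ⟨Real.sqrt (2 * V 0 / kp ^ 2) + ‖θs‖, fun t => ?_⟩
    have h2 := hlow (φ t)
    have h3 := hnorm (φ t)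
    have h4 : |kp| * (φ t ⬝ᵥ Γ⁻¹ *ᵥ φ t) ≤ V 0 := by
      have h5 := hVle t
      have hψnn : 0 ≤ ψ t ^ 2 / γ := by positivity
      simp only [hV] at h5
      linarith
    have h1 : kp ^ 2 / 2 * ‖φ t‖ ^ 2 ≤ V 0 := by
      nlinarith [sq_abs kp, hkpabs, norm_nonneg (φ t),
        mul_le_mul_of_nonneg_left h2 hkpabs.le]
    have h6 : ‖φ t‖ ^ 2 ≤ 2 * V 0 / kp ^ 2 := by
      rw [le_div_iff₀ (by positivity : (0:ℝ) < kp ^ 2)]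
      have h7 : ‖φ t‖ ^ 2 * kp ^ 2 = 2 * (kp ^ 2 / 2 * ‖φ t‖ ^ 2) := by ring
      rw [h7]
      linarith [h1]
    have h5 : ‖φ t‖ ≤ Real.sqrt (2 * V 0 / kp ^ 2) := by
      calc ‖φ t‖ = Real.sqrt (‖φ t‖ ^ 2) := (Real.sqrt_sq (norm_nonneg _)).symm
        _ ≤ _ := Real.sqrt_le_sqrt h6
    have hθeq : θ t = φ t + θs := by simp [hφ]
    calc ‖θ t‖ = ‖φ t + θs‖ := by rw [hθeq]
      _ ≤ ‖φ t‖ + ‖θs‖ := norm_add_le _ _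
      _ ≤ _ := by linarith
  · refine ⟨Real.sqrt (γ * V 0) + |kp|, fun t => ?_⟩
    have h1 : ψ t ^ 2 ≤ γ * V 0 := by
      have h5 := hVle t
      have hb := hBpos t
      simp only [hV] at h5
      have h6 : ψ t ^ 2 / γ ≤ V 0 := by nlinarith [hkpabs]
      rw [div_le_iff₀ hγ1] at h6
      nlinarith [h6]
    have h2 : |ψ t| ≤ Real.sqrt (γ * V 0) := by
      rw [← Real.sqrt_sq_eq_abs]
      exact Real.sqrt_le_sqrt h1
    have hρeq : ρ t = ψ t + kp := by simp [hψ]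
    calc |ρ t| = |ψ t + kp| := by rw [hρeq]
      _ ≤ |ψ t| + |kp| := abs_add_le _ _
      _ ≤ _ := by linarith
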